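/- In the setting of bounded isotonic regression on a partially ordered set (with isotonic edge set Ẽ on V = {1,…,n}, augmented graph G with edge set E = Ẽ ∪ {(i,j) : i ∈ max(V), j ∈ min(V)}, constraint set C_λ = {θ : θ_i ≤ θ_j ∀(i,j) ∈ Ẽ; θ_i ≤ θ_j + λ ∀ i ∈ max(V), j ∈ min(V)}, projection θ̂_λ(y) = P_{C_λ}(y), binding set J_y(λ) and induced subgraph G_{J_y(λ)} of G), for every fixed y ∈ ℝⁿ the map λ ↦ ω(G_{J_y(λ)}) is non-decreasing in λ on [0,∞); i.e., if 0 ≤ λ₁ ≤ λ₂ then the number of connected components of the undirected version of G_{J_y(λ₁)} is at most that of G_{J_y(λ₂)}. -/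

import Mathlib

open Matrix MeasureTheory Finset

namespace BddIsoAux

variable {n : ℕ}

/-- squared distance -/
noncomputable def qd (y θ : Fin n → ℝ) : ℝ := ∑ j, (y j - θ j)^2

/-- the isotonic cone -/
def K (Et : Fin n → Fin n → Prop) : Set (Fin n → ℝ) := {θ | ∀ i j, Et i j → θ i ≤ θ j}

noncomputable def clip (a b c : ℝ) : ℝ := max a (min b c)

noncomputable def phf (x : Fin n → ℝ) (a : ℝ) : ℝ := ∑ j, (max (a - x j) 0)^2
noncomputable def psf (x : Fin n → ℝ) (b : ℝ) : ℝ := ∑ j, (max (x j - b) 0)^2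

lemma qd_expand (y p θ : Fin n → ℝ) :
    qd y θ = qd y p - 2 * (∑ j, (y j - p j) * (θ j - p j)) + ∑ j, (θ j - p j)^2 := by
  unfold qd
  rw [Finset.mul_sum, ← Finset.sum_sub_distrib, ← Finset.sum_add_distrib]
  exact Finset.sum_congr rfl fun j _ => by ring

lemma qd_le_of_vi {y p θ : Fin n → ℝ} (h : (∑ j, (y j - p j) * (θ j - p j)) ≤ 0) :
    qd y p ≤ qd y θ := by
  have h2 : (0:ℝ) ≤ ∑ j, (θ j - p j)^2 := Finset.sum_nonneg fun j _ => sq_nonneg _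
  rw [qd_expand y p θ]; linarith

/-- uniqueness of the minimizer over a midpoint-closed set -/
lemma unique_min {C : Set (Fin n → ℝ)}
    (hmid : ∀ u w, u ∈ C → w ∈ C → (fun j => (u j + w j)/2) ∈ C)
    {y u w : Fin n → ℝ} (hu : u ∈ C) (hw : w ∈ C)
    (hum : ∀ θ ∈ C, qd y u ≤ qd y θ) (hwm : ∀ θ ∈ C, qd y w ≤ qd y θ) : u = w := by
  have hm := hmid u w hu hw
  have h1 := hum _ hm
  have h2 := hwm _ hm
  have hq : qd y (fun j => (u j + w j)/2)
      = (qd y u + qd y w)/2 - (1/4) * ∑ j, (u j - w j)^2 := by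
    unfold qd
    simp only [Finset.mul_sum, ← Finset.sum_add_distrib, Finset.sum_div,
      ← Finset.sum_sub_distrib]
    exact Finset.sum_congr rfl fun j _ => by ring
  have hs : (∑ j, (u j - w j)^2) ≤ 0 := by rw [hq] at h1 h2; linarith
  funext j
  have hz : ∀ j ∈ Finset.univ, (u j - w j)^2 = 0 := by
    rw [← Finset.sum_eq_zero_iff_of_nonneg (fun j _ => sq_nonneg (u j - w j))]
    have := Finset.sum_nonneg (fun j (_ : j ∈ Finset.univ) => sq_nonneg (u j - w j))
    linarith
  have := hz j (Finset.mem_univ j)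
  have := pow_eq_zero_iff (n := 2) (by norm_num) |>.mp this
  linarith [this]

lemma continuous_qd (y : Fin n → ℝ) : Continuous (fun θ : Fin n → ℝ => qd y θ) := by
  unfold qd
  exact continuous_finset_sum _ fun j _ =>
    ((continuous_const.sub (continuous_apply j)).pow 2)

lemma isClosed_K (Et : Fin n → Fin n → Prop) : IsClosed (K Et) := by
  have : K Et = ⋂ i, ⋂ j, {θ : Fin n → ℝ | Et i j → θ i ≤ θ j} := by
    ext θ; simp [K, Set.mem_iInter]
  rw [this]
  refine isClosed_iInter fun i => isClosed_iInter fun j => ?_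
  by_cases h : Et i j
  · have : {θ : Fin n → ℝ | Et i j → θ i ≤ θ j} = {θ | θ i ≤ θ j} := by
      ext θ; simp [h]
    rw [this]; exact isClosed_le (continuous_apply i) (continuous_apply j)
  · have : {θ : Fin n → ℝ | Et i j → θ i ≤ θ j} = Set.univ := by
      ext θ; simp [h]
    rw [this]; exact isClosed_univ

lemma exists_proj (Et : Fin n → Fin n → Prop) (y : Fin n → ℝ) :
    ∃ x ∈ K Et, ∀ θ ∈ K Et, qd y x ≤ qd y θ := by
  classical
  set Q : ℝ := qd y 0 with hQ
  have hQ0 : 0 ≤ Q := Finset.sum_nonneg fun j _ => sq_nonneg _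
  set S : Set (Fin n → ℝ) := {θ | qd y θ ≤ Q} ∩ K Et with hS
  have hscl : IsClosed S :=
    ((isClosed_le (continuous_qd y) continuous_const)).inter (isClosed_K Et)
  have hsub : S ⊆ Set.univ.pi (fun j => Set.Icc (y j - (Q+1)) (y j + (Q+1))) := by
    intro θ hθ j _
    have h1 : (y j - θ j)^2 ≤ Q := by
      have hq1 : qd y θ ≤ Q := hθ.1
      have : (y j - θ j)^2 ≤ qd y θ := by
        unfold qd
        exact Finset.single_le_sum (fun i (_ : i ∈ Finset.univ) => sq_nonneg (y i - θ i))
          (Finset.mem_univ j)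
      linarith
    have habs : |y j - θ j| ≤ Q + 1 := by
      rcases le_or_gt (|y j - θ j|) 1 with h | h
      · linarith
      · have h2 : |y j - θ j| ≤ |y j - θ j|^2 := by nlinarith [abs_nonneg (y j - θ j)]
        have h3 : |y j - θ j|^2 = (y j - θ j)^2 := sq_abs _
        linarith
    have := abs_le.mp habs
    constructor <;> linarith [this.1, this.2]
  have hcomp : IsCompact S := by
    refine IsCompact.of_isClosed_subset ?_ hscl hsub
    exact isCompact_univ_pi fun j => isCompact_Icc
  have hne : S.Nonempty := ⟨0, by simp [hS, hQ], fun i j _ => le_refl 0⟩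
  obtain ⟨x, hxS, hxmin⟩ := hcomp.exists_isMinOn hne (continuous_qd y).continuousOn
  refine ⟨x, hxS.2, fun θ hθ => ?_⟩
  by_cases h : qd y θ ≤ Q
  · exact hxmin ⟨h, hθ⟩
  · have hx : qd y x ≤ Q := hxS.1
    linarith

/-- variational inequality for the minimizer over a segment-closed set -/
lemma vi_of_min {C : Set (Fin n → ℝ)} {y x : Fin n → ℝ}
    (hseg : ∀ θ ∈ C, ∀ t : ℝ, 0 ≤ t → t ≤ 1 → (fun j => x j + t * (θ j - x j)) ∈ C)
    (hmin : ∀ θ ∈ C, qd y x ≤ qd y θ) :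
    ∀ θ ∈ C, (∑ j, (y j - x j) * (θ j - x j)) ≤ 0 := by
  intro θ hθ
  by_contra hpos
  push_neg at hpos
  set s : ℝ := ∑ j, (y j - x j) * (θ j - x j) with hs
  set B : ℝ := ∑ j, (θ j - x j)^2 with hB
  have hB0 : 0 ≤ B := Finset.sum_nonneg fun j _ => sq_nonneg _
  set t : ℝ := min 1 (s / (B + 1)) with ht
  have ht0 : 0 < t := lt_min one_pos (div_pos hpos (by linarith))
  have ht1 : t ≤ 1 := min_le_left _ _
  have hmem := hseg θ hθ t (le_of_lt ht0) ht1
  have hge := hmin _ hmem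
  have hexp : qd y (fun j => x j + t * (θ j - x j)) = qd y x - 2 * (t * s) + t^2 * B := by
    rw [qd_expand y x]
    have e1 : (∑ j, (y j - x j) * ((fun j => x j + t * (θ j - x j)) j - x j)) = t * s := by
      rw [hs, Finset.mul_sum]
      exact Finset.sum_congr rfl fun j _ => by ring
    have e2 : (∑ j, ((fun j => x j + t * (θ j - x j)) j - x j)^2) = t^2 * B := by
      rw [hB, Finset.mul_sum]
      exact Finset.sum_congr rfl fun j _ => by ring
    rw [e1, e2]
  rw [hexp] at hge
  have h2 : 2 * s ≤ t * B := by nlinarith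
  have htle : t ≤ s / (B + 1) := min_le_right _ _
  have h3 : t * B ≤ (s / (B + 1)) * B := mul_le_mul_of_nonneg_right htle hB0
  have h4 : (s / (B + 1)) * B < 2 * s := by
    rw [div_mul_eq_mul_div, div_lt_iff₀ (by linarith : (0:ℝ) < B + 1)]
    nlinarith
  linarith

/-- level set balance -/
lemma balance {Et : Fin n → Fin n → Prop} {y x : Fin n → ℝ} (hxK : x ∈ K Et)
    (hvi : ∀ θ ∈ K Et, (∑ j, (y j - x j) * (θ j - x j)) ≤ 0) (c : ℝ) :
    ∑ j ∈ Finset.univ.filter (fun j => x j = c), (y j - x j) = 0 := by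
  classical
  set P : Finset (Fin n × Fin n) :=
    (Finset.univ ×ˢ Finset.univ).filter (fun p : Fin n × Fin n => x p.1 < x p.2) with hP
  set E : Finset ℝ := insert (1:ℝ) (P.image fun p => x p.2 - x p.1) with hE
  have hEne : E.Nonempty := ⟨1, Finset.mem_insert_self _ _⟩
  set ε : ℝ := E.min' hEne with hε
  have hεpos : 0 < ε := by
    have hmem := E.min'_mem hEne
    rw [← hε] at hmem
    rw [hE] at hmem
    rcases Finset.mem_insert.mp hmem with h | h
    · rw [h]; norm_num
    · obtain ⟨p, hp, hpe⟩ := Finset.mem_image.mp h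
      rw [hP] at hp
      have := (Finset.mem_filter.mp hp).2
      rw [← hpe]; linarith
  have hgap : ∀ i j : Fin n, x i < x j → ε ≤ x j - x i := by
    intro i j hij
    refine Finset.min'_le _ _ ?_
    rw [hE]
    refine Finset.mem_insert_of_mem (Finset.mem_image.mpr ⟨(i,j), ?_, rfl⟩)
    rw [hP]
    exact Finset.mem_filter.mpr ⟨Finset.mem_product.mpr ⟨Finset.mem_univ _, Finset.mem_univ _⟩, hij⟩
  have hup : (fun j => x j + (if x j = c then ε else 0)) ∈ K Et := by
    intro i j hij
    have hbase := hxK i j hij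
    simp only
    by_cases hi : x i = c <;> by_cases hj : x j = c <;> simp [hi, hj]
    · have hne : x i ≠ x j := by intro h; apply hj; rw [← h, hi]
      have hlt : x i < x j := lt_of_le_of_ne hbase hne
      have := hgap i j hlt
      linarith
    · linarith
    · exact hbase
  have hdown : (fun j => x j - (if x j = c then ε else 0)) ∈ K Et := by
    intro i j hij
    have hbase := hxK i j hij
    simp only
    by_cases hi : x i = c <;> by_cases hj : x j = c <;> simp [hi, hj]
    · linarith
    · have hne : x i ≠ x j := by intro h; apply hi; rw [h, hj]
      have hlt : x i < x j := lt_of_le_of_ne hbase hne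
      have := hgap i j hlt
      linarith
    · exact hbase
  have h1 := hvi _ hup
  have h2 := hvi _ hdown
  have e1 : (∑ j, (y j - x j) * ((fun j => x j + (if x j = c then ε else 0)) j - x j))
      = ε * ∑ j ∈ Finset.univ.filter (fun j => x j = c), (y j - x j) := by
    rw [Finset.mul_sum, Finset.sum_filter]
    refine Finset.sum_congr rfl fun j _ => ?_
    by_cases hj : x j = c <;> simp [hj] <;> ring
  have e2 : (∑ j, (y j - x j) * ((fun j => x j - (if x j = c then ε else 0)) j - x j))
      = -ε * ∑ j ∈ Finset.univ.filter (fun j => x j = c), (y j - x j) := by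
    rw [Finset.mul_sum, Finset.sum_filter]
    refine Finset.sum_congr rfl fun j _ => ?_
    by_cases hj : x j = c <;> simp [hj] <;> ring
  rw [e1] at h1
  rw [e2] at h2
  set T := ∑ j ∈ Finset.univ.filter (fun j => x j = c), (y j - x j)
  have hT1 : T ≤ 0 := nonpos_of_mul_nonpos_right ?_ hεpos
  · have hT2 : 0 ≤ T := by nlinarith
    linarith
  · linarith [h1]

/-- weighted sums over level sets vanish -/
lemma weighted {y x : Fin n → ℝ}
    (hbal : ∀ c : ℝ, ∑ j ∈ Finset.univ.filter (fun j => x j = c), (y j - x j) = 0)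
    (w : ℝ → ℝ) : (∑ j, w (x j) * (y j - x j)) = 0 := by
  classical
  rw [← Finset.sum_fiberwise_of_maps_to (g := x) (t := Finset.univ.image x)
    (fun j _ => Finset.mem_image_of_mem x (Finset.mem_univ j))
    (fun j => w (x j) * (y j - x j))]
  refine Finset.sum_eq_zero fun c _ => ?_
  have : ∑ j ∈ Finset.univ.filter (fun j => x j = c), w (x j) * (y j - x j)
      = w c * ∑ j ∈ Finset.univ.filter (fun j => x j = c), (y j - x j) := by
    rw [Finset.mul_sum]
    refine Finset.sum_congr rfl fun j hj => ?_
    rw [(Finset.mem_filter.mp hj).2]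
  rw [this, hbal c, mul_zero]

lemma le_clip (a b c : ℝ) : a ≤ clip a b c := le_max_left _ _

lemma clip_le {a b : ℝ} (hab : a ≤ b) (c : ℝ) : clip a b c ≤ b :=
  max_le hab (min_le_left _ _)

lemma clip_mono {a b : ℝ} {c d : ℝ} (h : c ≤ d) : clip a b c ≤ clip a b d :=
  max_le_max (le_refl a) (min_le_min (le_refl b) h)

lemma clip_of_le {a b c : ℝ} (hab : a ≤ b) (h : c ≤ a) : clip a b c = a := by
  unfold clip
  rw [min_eq_right (h.trans hab), max_eq_left h]

lemma clip_of_ge {a b c : ℝ} (hab : a ≤ b) (h : b ≤ c) : clip a b c = b := by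
  unfold clip
  rw [min_eq_left h, max_eq_right hab]

lemma clip_of_mem {a b c : ℝ} (h1 : a ≤ c) (h2 : c ≤ b) : clip a b c = c := by
  unfold clip
  rw [min_eq_right h2, max_eq_right h1]

lemma eq_a_of_clip {a b c : ℝ} (hab : a < b) (h : clip a b c = a) : c ≤ a := by
  by_contra hc
  push_neg at hc
  have h1 : a < min b c := lt_min hab hc
  have h2 : a < clip a b c := lt_of_lt_of_le h1 (le_max_right _ _)
  rw [h] at h2
  exact lt_irrefl a h2

lemma eq_b_of_clip {a b c : ℝ} (hab : a < b) (h : clip a b c = b) : b ≤ c := by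
  by_contra hc
  push_neg at hc
  have h1 : min b c ≤ c := min_le_right _ _
  have h2 : clip a b c < b := max_lt hab (lt_of_le_of_lt h1 hc)
  rw [h] at h2
  exact lt_irrefl b h2

lemma clip_isotonic {Et : Fin n → Fin n → Prop} {x : Fin n → ℝ} (hx : x ∈ K Et)
    (a b : ℝ) : (fun j => clip a b (x j)) ∈ K Et :=
  fun i j hij => clip_mono (hx i j hij)

/-- pointwise convexity increments of t ↦ (t⁺)² -/
lemma relu_sq_conv {p q r : ℝ} (hpq : p ≤ q) (hr : 0 ≤ r) :
    (max p 0)^2 - (max (p-r) 0)^2 ≤ (max q 0)^2 - (max (q-r) 0)^2 := by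
  rcases le_total p 0 with h1 | h1 <;> rcases le_total q 0 with h2 | h2 <;>
    rcases le_total (p-r) 0 with h3 | h3 <;> rcases le_total (q-r) 0 with h4 | h4 <;>
    simp [max_eq_left, max_eq_right, h1, h2, h3, h4] <;> nlinarith

lemma relu_sq_mono {p q : ℝ} (hpq : p ≤ q) : (max p 0)^2 ≤ (max q 0)^2 := by
  have h1 : (0:ℝ) ≤ max p 0 := le_max_right _ _
  have h2 : max p 0 ≤ max q 0 := max_le_max hpq (le_refl 0)
  nlinarith

/-- the key value identity -/
lemma clip_qd {y x : Fin n → ℝ}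
    (hw : ∀ w : ℝ → ℝ, (∑ j, w (x j) * (y j - x j)) = 0)
    {a b : ℝ} (hab : a ≤ b) :
    qd y (fun j => clip a b (x j)) = qd y x + phf x a + psf x b := by
  have hexp : qd y (fun j => clip a b (x j)) = qd y x
      + (∑ j, (clip a b (x j) - x j)^2)
      + 2 * (∑ j, (clip a b (x j) - x j) * (x j - y j)) := by
    unfold qd
    rw [Finset.mul_sum, ← Finset.sum_add_distrib, ← Finset.sum_add_distrib]
    exact Finset.sum_congr rfl fun j _ => by ring
  have hzero : (∑ j, (clip a b (x j) - x j) * (x j - y j)) = 0 := by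
    have h1 := hw (fun c => clip a b c - c)
    have h2 : (∑ j, (clip a b (x j) - x j) * (x j - y j))
        = - ∑ j, (clip a b (x j) - x j) * (y j - x j) := by
      rw [← Finset.sum_neg_distrib]
      exact Finset.sum_congr rfl fun j _ => by ring
    rw [h2, h1, neg_zero]
  have hsq : ∀ j : Fin n, (clip a b (x j) - x j)^2
      = (max (a - x j) 0)^2 + (max (x j - b) 0)^2 := by
    intro j
    rcases le_total (x j) a with h | h
    · rw [clip_of_le hab h, max_eq_left (by linarith), max_eq_right (by linarith)]
      ring
    · rcases le_total b (x j) with h' | h'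
      · rw [clip_of_ge hab h', max_eq_right (by linarith), max_eq_left (by linarith)]
        ring
      · rw [clip_of_mem h h', max_eq_right (by linarith), max_eq_right (by linarith)]
        ring
  rw [hexp, hzero, mul_zero, add_zero]
  rw [Finset.sum_congr rfl (fun j _ => hsq j), Finset.sum_add_distrib]
  unfold phf psf
  ring

lemma reach_max {Et : Fin n → Fin n → Prop} (hacyc : ∀ i, ¬ Relation.TransGen Et i i)
    {θ : Fin n → ℝ} (hiso : ∀ i j, Et i j → θ i ≤ θ j) (k : Fin n) :
    ∃ i, (∀ j, ¬ Et i j) ∧ θ k ≤ θ i := by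
  classical
  have hwf : WellFounded (fun a b : Fin n => Relation.TransGen Et b a) := by
    have h1 : IsTrans (Fin n) (fun a b : Fin n => Relation.TransGen Et b a) :=
      ⟨fun a b c h1 h2 => h2.trans h1⟩
    have h2 : IsIrrefl (Fin n) (fun a b : Fin n => Relation.TransGen Et b a) :=
      ⟨fun a h => hacyc a h⟩
    exact Finite.wellFounded_of_trans_of_irrefl _
  refine hwf.induction (C := fun k => ∃ i, (∀ j, ¬ Et i j) ∧ θ k ≤ θ i) k ?_
  intro k ih
  by_cases h : ∀ j, ¬ Et k j
  · exact ⟨k, h, le_refl _⟩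
  · push_neg at h
    obtain ⟨j, hj⟩ := h
    obtain ⟨i, hi, hle⟩ := ih j (Relation.TransGen.single hj)
    exact ⟨i, hi, (hiso k j hj).trans hle⟩

lemma reach_min {Et : Fin n → Fin n → Prop} (hacyc : ∀ i, ¬ Relation.TransGen Et i i)
    {θ : Fin n → ℝ} (hiso : ∀ i j, Et i j → θ i ≤ θ j) (k : Fin n) :
    ∃ i, (∀ j, ¬ Et j i) ∧ θ i ≤ θ k := by
  classical
  have hwf : WellFounded (fun a b : Fin n => Relation.TransGen Et a b) := by
    have h1 : IsTrans (Fin n) (fun a b : Fin n => Relation.TransGen Et a b) :=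
      ⟨fun a b c h1 h2 => h1.trans h2⟩
    have h2 : IsIrrefl (Fin n) (fun a b : Fin n => Relation.TransGen Et a b) :=
      ⟨fun a h => hacyc a h⟩
    exact Finite.wellFounded_of_trans_of_irrefl _
  refine hwf.induction (C := fun k => ∃ i, (∀ j, ¬ Et j i) ∧ θ i ≤ θ k) k ?_
  intro k ih
  by_cases h : ∀ j, ¬ Et j k
  · exact ⟨k, h, le_refl _⟩
  · push_neg at h
    obtain ⟨j, hj⟩ := h
    obtain ⟨i, hi, hle⟩ := ih j (Relation.TransGen.single hj)
    exact ⟨i, hi, hle.trans (hiso j k hj)⟩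


/-- membership of clips in the constraint set -/
lemma clip_mem_Cl {Et : Fin n → Fin n → Prop} {maxV minV : Set (Fin n)}
    {Cl : ℝ → Set (Fin n → ℝ)}
    (hCl : ∀ lam : ℝ, Cl lam = {θ | (∀ i j, Et i j → θ i ≤ θ j) ∧
      ∀ i ∈ maxV, ∀ j ∈ minV, θ i ≤ θ j + lam})
    {x : Fin n → ℝ} (hxK : x ∈ K Et) {lam a b : ℝ}
    (hab : a ≤ b) (hwidth : b - a ≤ lam) :
    (fun j => clip a b (x j)) ∈ Cl lam := by
  rw [hCl]
  refine ⟨clip_isotonic hxK a b, fun i _ j _ => ?_⟩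
  have h1 : clip a b (x i) ≤ b := clip_le hab _
  have h2 : a ≤ clip a b (x j) := le_clip a b _
  linarith

/-- the projection onto `Cl lam` is a clip of the isotonic fit, on an optimal box -/
lemma clip_rep {Et : Fin n → Fin n → Prop}
    (hacyc : ∀ i, ¬ Relation.TransGen Et i i)
    {maxV minV : Set (Fin n)}
    (hmaxV : maxV = {i | ∀ j, ¬ Et i j}) (hminV : minV = {i | ∀ j, ¬ Et j i})
    {Cl : ℝ → Set (Fin n → ℝ)}
    (hCl : ∀ lam : ℝ, Cl lam = {θ | (∀ i j, Et i j → θ i ≤ θ j) ∧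
      ∀ i ∈ maxV, ∀ j ∈ minV, θ i ≤ θ j + lam})
    (hmid : ∀ lam : ℝ, ∀ u w, u ∈ Cl lam → w ∈ Cl lam → (fun j => (u j + w j)/2) ∈ Cl lam)
    {y x : Fin n → ℝ} (hn : 0 < n) (hxK : x ∈ K Et)
    (hvi : ∀ θ ∈ K Et, (∑ j, (y j - x j) * (θ j - x j)) ≤ 0)
    (hw : ∀ w : ℝ → ℝ, (∑ j, w (x j) * (y j - x j)) = 0)
    {lam : ℝ} (hlam : 0 ≤ lam) {θ : Fin n → ℝ}
    (hθC : θ ∈ Cl lam) (hθmin : ∀ θ' ∈ Cl lam, qd y θ ≤ qd y θ') :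
    ∃ m : ℝ, θ = (fun j => clip m (m + lam) (x j))
      ∧ (∀ α : ℝ, phf x m + psf x (m + lam) ≤ phf x α + psf x (α + lam))
      ∧ (∀ α : ℝ, phf x α + psf x (α + lam) ≤ phf x m + psf x (m + lam) →
          θ = (fun j => clip α (α + lam) (x j))) := by
  classical
  have hθC' := hθC
  rw [hCl] at hθC'
  have hθiso : ∀ i j, Et i j → θ i ≤ θ j := hθC'.1
  have hune : (Finset.univ : Finset (Fin n)).Nonempty := ⟨⟨0, hn⟩, Finset.mem_univ _⟩
  obtain ⟨i0, _, hi0⟩ := Finset.exists_min_image Finset.univ θ hune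
  obtain ⟨i1, _, hi1⟩ := Finset.exists_max_image Finset.univ θ hune
  set m : ℝ := θ i0 with hm
  set M : ℝ := θ i1 with hM
  have hmM : m ≤ M := hi0 i1 (Finset.mem_univ _)
  have hmle : ∀ j, m ≤ θ j := fun j => hi0 j (Finset.mem_univ _)
  have hMge : ∀ j, θ j ≤ M := fun j => hi1 j (Finset.mem_univ _)
  -- range bound
  have hrange : M - m ≤ lam := by
    obtain ⟨imax, hmax, hle1⟩ := reach_max hacyc hθiso i1
    obtain ⟨imin, hmin, hle2⟩ := reach_min hacyc hθiso i0
    have hbd : θ imax ≤ θ imin + lam := by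
      refine hθC'.2 imax ?_ imin ?_
      · rw [hmaxV]; exact hmax
      · rw [hminV]; exact hmin
    have := hMge imax
    have := hmle imin
    linarith
  -- Step A : qd y p0 ≤ qd y θ for p0 = clip on [m, M]
  set p0 : Fin n → ℝ := fun j => clip m M (x j) with hp0
  have hS : (∑ j, (y j - p0 j) * (θ j - p0 j)) ≤ 0 := by
    have hsplit : (∑ j, (y j - p0 j) * (θ j - p0 j))
        = (∑ j, (y j - x j) * (θ j - p0 j)) + ∑ j, (x j - p0 j) * (θ j - p0 j) := by
      rw [← Finset.sum_add_distrib]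
      exact Finset.sum_congr rfl fun j _ => by ring
    have hS1 : (∑ j, (y j - x j) * (θ j - p0 j)) ≤ 0 := by
      have hsplit1 : (∑ j, (y j - x j) * (θ j - p0 j))
          = (∑ j, (y j - x j) * ((θ j + x j) - x j)) - ∑ j, (fun c => clip m M c) (x j) * (y j - x j) := by
        rw [← Finset.sum_sub_distrib]
        exact Finset.sum_congr rfl fun j _ => by ring
      have hmem : (fun j => θ j + x j) ∈ K Et := fun i j hij =>
        add_le_add (hθiso i j hij) (hxK i j hij)
      have h1 := hvi _ hmem
      have h2 := hw (fun c => clip m M c)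
      simp only at h1 h2 hsplit1
      rw [hsplit1, h2, sub_zero]
      exact h1
    have hS2 : (∑ j, (x j - p0 j) * (θ j - p0 j)) ≤ 0 := by
      refine Finset.sum_nonpos fun j _ => ?_
      rw [hp0]
      simp only
      rcases le_total (x j) m with h | h
      · rw [clip_of_le hmM h]
        have := hmle j
        exact mul_nonpos_of_nonpos_of_nonneg (by linarith) (by linarith)
      · rcases le_total M (x j) with h' | h'
        · rw [clip_of_ge hmM h']
          have := hMge j
          exact mul_nonpos_of_nonneg_of_nonpos (by linarith) (by linarith)
        · rw [clip_of_mem h h']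
          simp
    rw [hsplit]
    linarith
  have hA : qd y p0 ≤ qd y θ := qd_le_of_vi hS
  -- Step B : p0 ∈ Cl lam hence θ = p0
  have hp0mem : p0 ∈ Cl lam := clip_mem_Cl hCl hxK hmM (by linarith)
  have hp0min : ∀ θ' ∈ Cl lam, qd y p0 ≤ qd y θ' := fun θ' hθ' =>
    le_trans hA (hθmin θ' hθ')
  have hθp0 : θ = p0 := unique_min (hmid lam) hθC hp0mem hθmin hp0min
  -- Step C : widen the box to exact width lam
  set p1 : Fin n → ℝ := fun j => clip m (m + lam) (x j) with hp1
  have hmlam : m ≤ m + lam := by linarith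
  have hval0 : qd y p0 = qd y x + phf x m + psf x M := clip_qd hw hmM
  have hval1 : qd y p1 = qd y x + phf x m + psf x (m + lam) := clip_qd hw hmlam
  have hps : psf x (m + lam) ≤ psf x M := by
    unfold psf
    refine Finset.sum_le_sum fun j _ => relu_sq_mono (by linarith)
  have hp1mem : p1 ∈ Cl lam := clip_mem_Cl hCl hxK hmlam (by linarith)
  have hp1le : qd y p1 ≤ qd y θ := by
    rw [hval1, hθp0, hval0]; linarith
  have hp1min : ∀ θ' ∈ Cl lam, qd y p1 ≤ qd y θ' := fun θ' hθ' =>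
    le_trans hp1le (hθmin θ' hθ')
  have hθp1 : θ = p1 := unique_min (hmid lam) hθC hp1mem hθmin hp1min
  -- optimality of m for g lam
  have hqθ : qd y θ = qd y x + phf x m + psf x (m + lam) := by rw [hθp1, hval1]
  have hgmin : ∀ α : ℝ, phf x m + psf x (m + lam) ≤ phf x α + psf x (α + lam) := by
    intro α
    have hαle : α ≤ α + lam := by linarith
    have hmem : (fun j => clip α (α + lam) (x j)) ∈ Cl lam :=
      clip_mem_Cl hCl hxK hαle (by linarith)
    have := hθmin _ hmem
    rw [hqθ, clip_qd hw hαle] at this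
    linarith
  refine ⟨m, hθp1, hgmin, fun α hαopt => ?_⟩
  have hαle : α ≤ α + lam := by linarith
  have hmem : (fun j => clip α (α + lam) (x j)) ∈ Cl lam :=
    clip_mem_Cl hCl hxK hαle (by linarith)
  have hle2 : qd y (fun j => clip α (α + lam) (x j)) ≤ qd y θ := by
    rw [clip_qd hw hαle, hqθ]
    linarith
  have hmin2 : ∀ θ' ∈ Cl lam, qd y (fun j => clip α (α + lam) (x j)) ≤ qd y θ' :=
    fun θ' hθ' => le_trans hle2 (hθmin θ' hθ')
  exact unique_min (hmid lam) hθC hmem hθmin hmin2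


lemma exchange_psi (x : Fin n → ℝ) {m₁ m₂ l₁ l₂ : ℝ} (h12 : m₁ ≤ m₂) (hl : l₁ ≤ l₂) :
    psf x (m₁ + l₂) + psf x (m₂ + l₁) ≤ psf x (m₁ + l₁) + psf x (m₂ + l₂) := by
  unfold psf
  rw [← Finset.sum_add_distrib, ← Finset.sum_add_distrib]
  refine Finset.sum_le_sum fun j _ => ?_
  have h := relu_sq_conv (p := x j - (m₂ + l₁)) (q := x j - (m₁ + l₁)) (r := l₂ - l₁)
    (by linarith) (by linarith)
  have e1 : x j - (m₂ + l₁) - (l₂ - l₁) = x j - (m₂ + l₂) := by ring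
  have e2 : x j - (m₁ + l₁) - (l₂ - l₁) = x j - (m₁ + l₂) := by ring
  rw [e1, e2] at h
  linarith

lemma exchange_phi (x : Fin n → ℝ) {a b δ : ℝ} (hd : 0 ≤ δ) (hab : a + δ ≤ b) :
    phf x (a + δ) + phf x (b - δ) ≤ phf x a + phf x b := by
  unfold phf
  rw [← Finset.sum_add_distrib, ← Finset.sum_add_distrib]
  refine Finset.sum_le_sum fun j _ => ?_
  have h := relu_sq_conv (p := a + δ - x j) (q := b - x j) (r := δ)
    (by linarith) hd
  have e1 : a + δ - x j - δ = a - x j := by ring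
  have e2 : b - x j - δ = b - δ - x j := by ring
  rw [e1, e2] at h
  linarith

end BddIsoAux

open BddIsoAux in
/-- For bounded isotonic regression on a poset, for every fixed `y` the
number of connected components of the binding-constraint subgraph `G_{J_y(λ)}`
(whose divergence/degrees-of-freedom it equals) is non-decreasing in the bound `λ`. -/
theorem bounded_isotonic_components_monotone {n : ℕ} (Et : Fin n → Fin n → Prop)
    (hacyc : ∀ i, ¬ Relation.TransGen Et i i)
    (maxV minV : Set (Fin n))
    (hmaxV : maxV = {i | ∀ j, ¬ Et i j}) (hminV : minV = {i | ∀ j, ¬ Et j i})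
    (Cl : ℝ → Set (Fin n → ℝ))
    (hCl : ∀ lam : ℝ, Cl lam = {θ | (∀ i j, Et i j → θ i ≤ θ j) ∧
      ∀ i ∈ maxV, ∀ j ∈ minV, θ i ≤ θ j + lam})
    (y : Fin n → ℝ)
    (θhatl : ℝ → (Fin n → ℝ))
    (hprojl : ∀ lam : ℝ, 0 ≤ lam → θhatl lam ∈ Cl lam ∧
      ∀ θ ∈ Cl lam, ∑ j, (y j - θhatl lam j) ^ 2 ≤ ∑ j, (y j - θ j) ^ 2)
    -- the binding-constraint subgraph of the augmented graph, for each λ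
    (G : ℝ → SimpleGraph (Fin n))
    (hG : ∀ lam : ℝ, G lam = SimpleGraph.fromRel (fun u v =>
      (Et u v ∧ θhatl lam u = θhatl lam v) ∨
      (u ∈ maxV ∧ v ∈ minV ∧ θhatl lam u = θhatl lam v + lam)))
    (lam₁ lam₂ : ℝ) (h₁ : 0 ≤ lam₁) (h₁₂ : lam₁ ≤ lam₂) :
    Nat.card (G lam₁).ConnectedComponent ≤ Nat.card (G lam₂).ConnectedComponent := by
  classical
  rcases eq_or_lt_of_le h₁₂ with heq | hlt
  · rw [heq]
  rcases Nat.eq_zero_or_pos n with hn0 | hn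
  · subst hn0
    have hE1 : IsEmpty ((G lam₁).ConnectedComponent) :=
      ⟨fun c => SimpleGraph.ConnectedComponent.ind (fun v => Fin.elim0 v) c⟩
    have hE2 : IsEmpty ((G lam₂).ConnectedComponent) :=
      ⟨fun c => SimpleGraph.ConnectedComponent.ind (fun v => Fin.elim0 v) c⟩
    rw [Nat.card_of_isEmpty, Nat.card_of_isEmpty]
  -- main case
  have h₂ : (0:ℝ) ≤ lam₂ := le_trans h₁ h₁₂
  have hlam2pos : 0 < lam₂ := lt_of_le_of_lt h₁ hlt
  obtain ⟨hθC1, hθmin1'⟩ := hprojl lam₁ h₁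
  obtain ⟨hθC2, hθmin2'⟩ := hprojl lam₂ h₂
  have hθmin1 : ∀ θ ∈ Cl lam₁, qd y (θhatl lam₁) ≤ qd y θ := fun θ hθ => hθmin1' θ hθ
  have hθmin2 : ∀ θ ∈ Cl lam₂, qd y (θhatl lam₂) ≤ qd y θ := fun θ hθ => hθmin2' θ hθ
  -- midpoint closure of Cl
  have hmid : ∀ lam : ℝ, ∀ u w, u ∈ Cl lam → w ∈ Cl lam →
      (fun j => (u j + w j)/2) ∈ Cl lam := by
    intro lam u w hu hw
    rw [hCl] at hu hw ⊢
    refine ⟨fun i j hij => ?_, fun i hi j hj => ?_⟩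
    · have := hu.1 i j hij
      have := hw.1 i j hij
      simp only
      linarith
    · have := hu.2 i hi j hj
      have := hw.2 i hi j hj
      simp only
      linarith
  -- the isotonic fit
  obtain ⟨x, hxK, hxmin⟩ := exists_proj Et y
  have hseg : ∀ θ ∈ K Et, ∀ t : ℝ, 0 ≤ t → t ≤ 1 →
      (fun j => x j + t * (θ j - x j)) ∈ K Et := by
    intro θ hθ t ht0 ht1 i j hij
    have h1 := hθ i j hij
    have h2 := hxK i j hij
    simp only
    nlinarith
  have hvi := vi_of_min hseg hxmin
  have hw : ∀ w : ℝ → ℝ, (∑ j, w (x j) * (y j - x j)) = 0 :=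
    weighted (balance hxK hvi)
  -- clip representations
  obtain ⟨m₁, hθ1, hg1min, hg1eq⟩ := clip_rep hacyc hmaxV hminV hCl hmid hn hxK hvi hw h₁ hθC1 hθmin1
  obtain ⟨m₂, hθ2, hg2min, hg2eq⟩ := clip_rep hacyc hmaxV hminV hCl hmid hn hxK hvi hw h₂ hθC2 hθmin2
  set δ : ℝ := lam₂ - lam₁ with hδ
  have hδ0 : 0 ≤ δ := by simp [hδ]; linarith
  -- monotone selection of the λ₂-box
  obtain ⟨A2, hA2opt, hA2le, hA2ge⟩ :
      ∃ A2 : ℝ, (phf x A2 + psf x (A2 + lam₂) ≤ phf x m₂ + psf x (m₂ + lam₂))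
        ∧ A2 ≤ m₁ ∧ m₁ + lam₁ ≤ A2 + lam₂ := by
    by_cases hB : m₁ < m₂
    · refine ⟨m₁, ?_, le_refl _, by linarith⟩
      have hopt := hg1min m₂
      have hconv := exchange_psi x (le_of_lt hB) h₁₂
      linarith
    · push_neg at hB
      by_cases hC : m₂ + lam₂ < m₁ + lam₁
      · refine ⟨m₁ - δ, ?_, by linarith, by simp [hδ]; linarith⟩
        have hopt := hg1min (m₂ + δ)
        have e1 : m₂ + δ + lam₁ = m₂ + lam₂ := by simp [hδ]; ring
        rw [e1] at hopt
        have hconv := exchange_phi x hδ0 (by simp [hδ]; linarith : m₂ + δ ≤ m₁)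
        have e2 : m₁ - δ + lam₂ = m₁ + lam₁ := by simp [hδ]; ring
        rw [e2]
        linarith
      · push_neg at hC
        exact ⟨m₂, le_refl _, hB, hC⟩
  have hθ2' : θhatl lam₂ = (fun j => clip A2 (A2 + lam₂) (x j)) := hg2eq A2 hA2opt
  -- box endpoints
  set A1 : ℝ := m₁ with hA1
  set B1 : ℝ := m₁ + lam₁ with hB1
  set B2 : ℝ := A2 + lam₂ with hB2
  have hA1B1 : A1 ≤ B1 := by simp [hA1, hB1]; linarith
  have hA2B2 : A2 < B2 := by simp [hB2]; linarith
  have hAA : A2 ≤ A1 := hA2le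
  have hBB : B1 ≤ B2 := hA2ge
  -- binding transfer for isotonic edges
  have hN1 : ∀ u v, Et u v → θhatl lam₂ u = θhatl lam₂ v → θhatl lam₁ u = θhatl lam₁ v := by
    intro u v huv heq
    rw [hθ2'] at heq
    simp only at heq
    rw [hθ1]
    simp only
    have hxuv : x u ≤ x v := hxK u v huv
    by_cases hv : x v ≤ A2
    · rw [clip_of_le hA1B1 (le_trans hv hAA), clip_of_le hA1B1 (le_trans (le_trans hxuv hv) hAA)]
    · by_cases hu : B2 ≤ x u
      · rw [clip_of_ge hA1B1 (le_trans hBB hu), clip_of_ge hA1B1 (le_trans (le_trans hBB hu) hxuv)]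
      · push_neg at hv hu
        -- in this case x u = x v
        have hxeq : x u = x v := by
          by_contra hne
          have hv' : clip A2 B2 (x v) ≠ A2 := by
            intro h
            exact absurd (eq_a_of_clip hA2B2 h) (not_le.mpr hv)
          by_cases hu2 : x u ≤ A2
          · rw [clip_of_le (le_of_lt hA2B2) hu2] at heq
            exact hv' heq.symm
          · push_neg at hu2
            rw [clip_of_mem (le_of_lt hu2) (le_of_lt hu)] at heq
            by_cases hv2 : B2 ≤ x v
            · rw [clip_of_ge (le_of_lt hA2B2) hv2] at heq
              exact absurd heq (ne_of_lt hu)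
            · push_neg at hv2
              rw [clip_of_mem (le_of_lt hv) (le_of_lt hv2)] at heq
              exact hne heq
        rw [hxeq]
  -- binding transfer for bound edges
  have hN2 : ∀ u v, u ∈ maxV → v ∈ minV → θhatl lam₂ u = θhatl lam₂ v + lam₂ →
      θhatl lam₁ u = θhatl lam₁ v + lam₁ := by
    intro u v humax hvmin heq
    rw [hθ2'] at heq
    simp only at heq
    have hub : clip A2 B2 (x u) ≤ B2 := clip_le (le_of_lt hA2B2) _
    have hvb : A2 ≤ clip A2 B2 (x v) := le_clip _ _ _
    have hu2 : clip A2 B2 (x u) = B2 := by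
      simp only [hB2] at *
      linarith
    have hv2 : clip A2 B2 (x v) = A2 := by
      simp only [hB2] at *
      linarith
    have hxu : B2 ≤ x u := eq_b_of_clip hA2B2 hu2
    have hxv : x v ≤ A2 := eq_a_of_clip hA2B2 hv2
    rw [hθ1]
    simp only
    rw [clip_of_ge hA1B1 (le_trans hBB hxu), clip_of_le hA1B1 (le_trans hxv hAA)]
  -- graph inclusion
  have hGle : G lam₂ ≤ G lam₁ := by
    rw [hG lam₁, hG lam₂]
    intro u v huv
    rw [SimpleGraph.fromRel_adj] at huv ⊢
    obtain ⟨hne, hrel⟩ := huv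
    refine ⟨hne, ?_⟩
    rcases hrel with (⟨h1, h2⟩ | ⟨h1, h2, h3⟩) | (⟨h1, h2⟩ | ⟨h1, h2, h3⟩)
    · exact Or.inl (Or.inl ⟨h1, hN1 u v h1 h2⟩)
    · exact Or.inl (Or.inr ⟨h1, h2, hN2 u v h1 h2 h3⟩)
    · exact Or.inr (Or.inl ⟨h1, hN1 v u h1 h2⟩)
    · exact Or.inr (Or.inr ⟨h1, h2, hN2 v u h1 h2 h3⟩)
  -- components comparison
  let F : (G lam₂).ConnectedComponent → (G lam₁).ConnectedComponent :=
    SimpleGraph.ConnectedComponent.map (SimpleGraph.Hom.ofLE hGle)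
  have hsurj : Function.Surjective F := by
    intro c
    refine SimpleGraph.ConnectedComponent.ind (fun v => ?_) c
    exact ⟨(G lam₂).connectedComponentMk v, rfl⟩
  exact Nat.card_le_card_of_surjective F hsurj
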